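/- For every x ∈ ℂ with 0 < Re x < 1, the Davenport–Heilbronn completed functions satisfy the functional equations ξ_+(x) = ξ_+(1−x) and ξ_−(x) = −ξ_−(1−x). -/

import Mathlib

open Complex HurwitzZeta

/-- The golden ratio `φ = (1+√5)/2`. -/
noncomputable def goldenPhi : ℝ := (1 + Real.sqrt 5) / 2

/-- `τ₊ := -φ + √(1+φ²)`. -/
noncomputable def tauPlus : ℝ := -goldenPhi + Real.sqrt (1 + goldenPhi ^ 2)

/-- `τ₋ := -φ - √(1+φ²)`. -/
noncomputable def tauMinus : ℝ := -goldenPhi - Real.sqrt (1 + goldenPhi ^ 2)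

/-- The Davenport–Heilbronn function with parameter `τ`:
`f_τ(x) := 5^(-x)·[ζ(x,1/5) + τ·(ζ(x,2/5) - ζ(x,3/5)) - ζ(x,4/5)]`,
where `ζ(x,a)` is the Hurwitz zeta function. -/
noncomputable def fDH (τ : ℝ) (x : ℂ) : ℂ :=
  (5 : ℂ) ^ (-x) * (hurwitzZeta ((1 / 5 : ℝ) : UnitAddCircle) x +
    (τ : ℂ) * (hurwitzZeta ((2 / 5 : ℝ) : UnitAddCircle) x -
      hurwitzZeta ((3 / 5 : ℝ) : UnitAddCircle) x) -
    hurwitzZeta ((4 / 5 : ℝ) : UnitAddCircle) x)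

/-- The completed Davenport–Heilbronn function
`ξ_τ(x) := (π/5)^(-x/2)·Γ((1+x)/2)·f_τ(x)`. -/
noncomputable def xiDH (τ : ℝ) (x : ℂ) : ℂ :=
  ((Real.pi / 5 : ℝ) : ℂ) ^ (-x / 2) * Complex.Gamma ((1 + x) / 2) * fDH τ x

/-! ### Auxiliary scalar facts -/

/-- `v₁ = sin(2π/5) + τ·sin(4π/5)`, the eigenvalue-normalising constant. -/
noncomputable def DHv (τ : ℝ) : ℝ :=
  Real.sin (2 * Real.pi * (1/5)) + τ * Real.sin (2 * Real.pi * (2/5))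

lemma sqrt5_sq : Real.sqrt 5 ^ 2 = 5 := Real.sq_sqrt (by norm_num)

lemma sqrtPhi_sq : Real.sqrt (1 + goldenPhi ^ 2) ^ 2 = 1 + goldenPhi ^ 2 :=
  Real.sq_sqrt (by positivity)

lemma h_tauPlus : tauPlus ^ 2 + 2 * goldenPhi * tauPlus = 1 := by
  have := sqrtPhi_sq; rw [tauPlus]; nlinarith [this]

lemma h_tauMinus : tauMinus ^ 2 + 2 * goldenPhi * tauMinus = 1 := by
  have := sqrtPhi_sq; rw [tauMinus]; nlinarith [this]

lemma sin_4pi5 : Real.sin (2 * Real.pi * (2/5)) = Real.sin (Real.pi / 5) := by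
  rw [show 2 * Real.pi * (2/5) = Real.pi - Real.pi / 5 by ring, Real.sin_pi_sub]

lemma sin_2pi5 : Real.sin (2 * Real.pi * (1/5)) = goldenPhi * Real.sin (Real.pi / 5) := by
  rw [show 2 * Real.pi * (1/5) = 2 * (Real.pi / 5) by ring, Real.sin_two_mul,
    Real.cos_pi_div_five, goldenPhi]
  ring

lemma sin_pi5_sq : Real.sin (Real.pi / 5) ^ 2 = (10 - 2 * Real.sqrt 5) / 16 := by
  have h := Real.sin_sq_add_cos_sq (Real.pi / 5)
  rw [Real.cos_pi_div_five] at h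
  nlinarith [sqrt5_sq]

lemma sin_pi5_nonneg : 0 ≤ Real.sin (Real.pi / 5) :=
  Real.sin_nonneg_of_nonneg_of_le_pi (by positivity) (by nlinarith [Real.pi_pos])

lemma key_sqrt : 2 * Real.sqrt (1 + goldenPhi ^ 2) * Real.sin (Real.pi / 5) = Real.sqrt 5 := by
  have h1 : (2 * Real.sqrt (1 + goldenPhi ^ 2) * Real.sin (Real.pi / 5)) ^ 2 = 5 := by
    have hs5 : Real.sqrt 5 ^ 2 = 5 := sqrt5_sq
    have h2 := sqrtPhi_sq
    have h3 := sin_pi5_sq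
    rw [mul_pow, mul_pow, h2, h3, goldenPhi]
    nlinarith [hs5]
  have h0 : 0 ≤ 2 * Real.sqrt (1 + goldenPhi ^ 2) * Real.sin (Real.pi / 5) := by
    have := sin_pi5_nonneg
    positivity
  rw [← Real.sqrt_sq h0, h1]

lemma hv_plus : 2 * DHv tauPlus = Real.sqrt 5 := by
  rw [DHv, sin_2pi5, sin_4pi5, tauPlus, ← key_sqrt]; ring

lemma hv_minus : 2 * DHv tauMinus = -Real.sqrt 5 := by
  rw [DHv, sin_2pi5, sin_4pi5, tauMinus, ← key_sqrt]; ring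

lemma sin_shift (x y : ℝ) (m : ℤ) (h : y = x + m * (2 * Real.pi)) :
    Real.sin y = Real.sin x := by
  rw [h, Real.sin_add_int_mul_two_pi]

lemma circ (a : ℝ) : ((1 - a : ℝ) : UnitAddCircle) = -((a : ℝ) : UnitAddCircle) := by
  rw [sub_eq_add_neg, AddCircle.coe_add, AddCircle.coe_period, zero_add]
  simp

/-! ### The Dirichlet series identity -/

/-- HasSum for a single residue class mod 5. -/
lemma hasSum_class (a : ℝ) (k : ℕ) (hk : (k : ℝ) = 5 * a) (hk1 : 1 ≤ k) (hk4 : k ≤ 4)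
    (W : ℂ) {s : ℂ} (hs : 1 < s.re) :
    HasSum (fun n : ℕ => if n % 5 = k then W / (n : ℂ) ^ s else 0)
      (W * ((5 : ℂ) ^ (-s) * hurwitzZeta (a : UnitAddCircle) s)) := by
  have hk1' : (1 : ℝ) ≤ (k : ℝ) := by exact_mod_cast hk1
  have hk4' : (k : ℝ) ≤ 4 := by exact_mod_cast hk4
  have ha0 : 0 ≤ a := by nlinarith
  have ha1 : a ≤ 1 := by nlinarith
  have H := (hasSum_hurwitzZeta_of_one_lt_re ⟨ha0, ha1⟩ hs).mul_left (W * (5 : ℂ) ^ (-s))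
  rw [mul_assoc] at H
  have hinj : Function.Injective (fun m : ℕ => 5 * m + k) := fun a b h => by
    simpa using h
  have hvan : ∀ n : ℕ, n ∉ Set.range (fun m : ℕ => 5 * m + k) →
      (if n % 5 = k then W / (n : ℂ) ^ s else 0) = 0 := by
    intro n hn
    rw [if_neg]
    intro h
    exact hn ⟨n / 5, show 5 * (n / 5) + k = n by omega⟩
  rw [← Function.Injective.hasSum_iff hinj hvan]
  refine H.congr_fun fun m => ?_
  have hmod : (5 * m + k) % 5 = k := by omega
  simp only [Function.comp_apply]
  rw [if_pos hmod]
  have hcpow : ((5 * m + k : ℕ) : ℂ) ^ s = (5 : ℂ) ^ s * ((m : ℂ) + (a : ℂ)) ^ s := by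
    have hk' : ((k : ℕ) : ℂ) = 5 * (a : ℂ) := by exact_mod_cast congrArg Complex.ofReal hk
    have h2 := mul_cpow_ofReal_nonneg (by norm_num : (0:ℝ) ≤ 5)
      (by positivity : (0:ℝ) ≤ (m : ℝ) + a) s
    rw [show ((5:ℝ) : ℂ) * (((m : ℝ) + a : ℝ) : ℂ) = ((5 * m + k : ℕ) : ℂ) by
      push_cast [hk']; ring] at h2
    rw [h2]
    norm_num
  rw [hcpow, cpow_neg]
  ring

lemma coeff1 (τ : ℝ) : Real.sin (2*Real.pi*(1/5)) + τ * Real.sin (2*Real.pi*(2/5)) = DHv τ := rfl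

lemma coeff2 (τ : ℝ) (hτ : τ^2 + 2*goldenPhi*τ = 1) :
    Real.sin (2*Real.pi*(2/5)) + τ * -Real.sin (2*Real.pi*(1/5)) = DHv τ * τ := by
  rw [DHv, sin_2pi5, sin_4pi5]
  linear_combination (-Real.sin (Real.pi/5)) * hτ

set_option linter.unreachableTactic false in
set_option linter.unusedTactic false in
lemma key_hasSum (τ : ℝ) (hτ : τ^2 + 2*goldenPhi*τ = 1) {s : ℂ} (hs : 1 < s.re) :
    sinZeta ((1/5 : ℝ) : UnitAddCircle) s + (τ:ℂ) * sinZeta ((2/5 : ℝ) : UnitAddCircle) s =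
    2 * ((DHv τ : ℝ) : ℂ) * (5:ℂ)^(-s) * (hurwitzZetaOdd ((1/5 : ℝ) : UnitAddCircle) s
      + (τ:ℂ) * hurwitzZetaOdd ((2/5 : ℝ) : UnitAddCircle) s) := by
  have H1 := hasSum_class (1/5) 1 (by norm_num) le_rfl (by norm_num) ((DHv τ : ℝ) : ℂ) hs
  have H2 := hasSum_class (2/5) 2 (by norm_num) (by norm_num) (by norm_num)
    (((DHv τ : ℝ) : ℂ) * τ) hs
  have H3 := hasSum_class (3/5) 3 (by norm_num) (by norm_num) (by norm_num)
    (-(((DHv τ : ℝ) : ℂ) * τ)) hs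
  have H4 := hasSum_class (4/5) 4 (by norm_num) (by norm_num) (by norm_num)
    (-((DHv τ : ℝ) : ℂ)) hs
  have Htot := ((H1.add H2).add H3).add H4
  have HL := (hasSum_nat_sinZeta (1/5 : ℝ) hs).add
    ((hasSum_nat_sinZeta (2/5 : ℝ) hs).mul_left (τ:ℂ))
  have hpt : ∀ n : ℕ,
      (Real.sin (2*Real.pi*(1/5)*n) : ℂ) / (n:ℂ)^s
          + (τ:ℂ) * ((Real.sin (2*Real.pi*(2/5)*n) : ℂ) / (n:ℂ)^s)
      = (((if n % 5 = 1 then ((DHv τ : ℝ) : ℂ) / (n:ℂ)^s else 0)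
        + (if n % 5 = 2 then ((DHv τ : ℝ) : ℂ) * τ / (n:ℂ)^s else 0))
        + (if n % 5 = 3 then -(((DHv τ : ℝ) : ℂ) * τ) / (n:ℂ)^s else 0))
        + (if n % 5 = 4 then -((DHv τ : ℝ) : ℂ) / (n:ℂ)^s else 0) := by
    intro n
    obtain ⟨q, k, hk5, rfl⟩ : ∃ q k, k < 5 ∧ n = 5 * q + k :=
      ⟨n / 5, n % 5, Nat.mod_lt _ (by norm_num), by omega⟩
    have hk' : k = 0 ∨ k = 1 ∨ k = 2 ∨ k = 3 ∨ k = 4 := by omega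
    rcases hk' with rfl|rfl|rfl|rfl|rfl
    · rw [show Real.sin (2*Real.pi*(1/5)*((5*q+0 : ℕ):ℝ)) = Real.sin 0 from
        sin_shift _ _ q (by push_cast; ring),
        show Real.sin (2*Real.pi*(2/5)*((5*q+0 : ℕ):ℝ)) = Real.sin 0 from
        sin_shift _ _ (2*q) (by push_cast; ring), Real.sin_zero]
      norm_num [Nat.mul_add_mod]
    · rw [show Real.sin (2*Real.pi*(1/5)*((5*q+1 : ℕ):ℝ)) = Real.sin (2*Real.pi*(1/5)) from
        sin_shift _ _ q (by push_cast; ring),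
        show Real.sin (2*Real.pi*(2/5)*((5*q+1 : ℕ):ℝ)) = Real.sin (2*Real.pi*(2/5)) from
        sin_shift _ _ (2*q) (by push_cast; ring)]
      have hc := congrArg (Complex.ofReal) (coeff1 τ)
      push_cast at hc
      norm_num [Nat.mul_add_mod]
      push_cast
      first
      | linear_combination ((5*(q:ℂ)+1)^s)⁻¹ * hc
      | linear_combination (-((5*(q:ℂ)+1)^s)⁻¹) * hc
    · rw [show Real.sin (2*Real.pi*(1/5)*((5*q+2 : ℕ):ℝ)) = Real.sin (2*Real.pi*(2/5)) from
        sin_shift _ _ q (by push_cast; ring),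
        show Real.sin (2*Real.pi*(2/5)*((5*q+2 : ℕ):ℝ)) = Real.sin (-(2*Real.pi*(1/5))) from
        sin_shift _ _ (2*q+1) (by push_cast; ring), Real.sin_neg]
      have hc := congrArg (Complex.ofReal) (coeff2 τ hτ)
      push_cast at hc
      norm_num [Nat.mul_add_mod]
      push_cast
      first
      | linear_combination ((5*(q:ℂ)+2)^s)⁻¹ * hc
      | linear_combination (-((5*(q:ℂ)+2)^s)⁻¹) * hc
    · rw [show Real.sin (2*Real.pi*(1/5)*((5*q+3 : ℕ):ℝ)) = Real.sin (-(2*Real.pi*(2/5))) from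
        sin_shift _ _ (q+1) (by push_cast; ring),
        show Real.sin (2*Real.pi*(2/5)*((5*q+3 : ℕ):ℝ)) = Real.sin (2*Real.pi*(1/5)) from
        sin_shift _ _ (2*q+1) (by push_cast; ring), Real.sin_neg]
      have hc := congrArg (Complex.ofReal) (coeff2 τ hτ)
      push_cast at hc
      norm_num [Nat.mul_add_mod]
      push_cast
      first
      | linear_combination ((5*(q:ℂ)+3)^s)⁻¹ * hc
      | linear_combination (-((5*(q:ℂ)+3)^s)⁻¹) * hc
    · rw [show Real.sin (2*Real.pi*(1/5)*((5*q+4 : ℕ):ℝ)) = Real.sin (-(2*Real.pi*(1/5))) from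
        sin_shift _ _ (q+1) (by push_cast; ring),
        show Real.sin (2*Real.pi*(2/5)*((5*q+4 : ℕ):ℝ)) = Real.sin (-(2*Real.pi*(2/5))) from
        sin_shift _ _ (2*q+2) (by push_cast; ring), Real.sin_neg, Real.sin_neg]
      have hc := congrArg (Complex.ofReal) (coeff1 τ)
      push_cast at hc
      norm_num [Nat.mul_add_mod]
      push_cast
      first
      | linear_combination ((5*(q:ℂ)+4)^s)⁻¹ * hc
      | linear_combination (-((5*(q:ℂ)+4)^s)⁻¹) * hc
  have heq := HL.unique (Htot.congr_fun hpt)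
  refine heq.trans ?_
  rw [show ((4/5:ℝ) : UnitAddCircle) = -(((1/5:ℝ) : ℝ) : UnitAddCircle) by
      rw [← circ]; exact congrArg _ (by norm_num),
    show ((3/5:ℝ) : UnitAddCircle) = -(((2/5:ℝ) : ℝ) : UnitAddCircle) by
      rw [← circ]; exact congrArg _ (by norm_num),
    hurwitzZetaOdd_eq, hurwitzZetaOdd_eq]
  ring

/-! ### Analytic continuation -/

lemma key_global (τ : ℝ) (hτ : τ^2 + 2*goldenPhi*τ = 1) (s : ℂ) :
    sinZeta ((1/5 : ℝ) : UnitAddCircle) s + (τ:ℂ) * sinZeta ((2/5 : ℝ) : UnitAddCircle) s =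
    2 * ((DHv τ : ℝ) : ℂ) * (5:ℂ)^(-s) * (hurwitzZetaOdd ((1/5 : ℝ) : UnitAddCircle) s
      + (τ:ℂ) * hurwitzZetaOdd ((2/5 : ℝ) : UnitAddCircle) s) := by
  have hf : Differentiable ℂ (fun z => sinZeta ((1/5 : ℝ) : UnitAddCircle) z
      + (τ:ℂ) * sinZeta ((2/5 : ℝ) : UnitAddCircle) z) :=
    (differentiableAt_sinZeta _).add ((differentiableAt_sinZeta _).const_mul _)
  have hg : Differentiable ℂ (fun z => 2 * ((DHv τ : ℝ) : ℂ) * (5:ℂ)^(-z) *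
      (hurwitzZetaOdd ((1/5 : ℝ) : UnitAddCircle) z
        + (τ:ℂ) * hurwitzZetaOdd ((2/5 : ℝ) : UnitAddCircle) z)) := by
    apply Differentiable.mul
    · exact (differentiable_neg.const_cpow (Or.inl (by norm_num))).const_mul _
    · exact (differentiable_hurwitzZetaOdd _).add
        ((differentiable_hurwitzZetaOdd _).const_mul _)
  have hopen : IsOpen {z : ℂ | 1 < z.re} := isOpen_lt continuous_const continuous_re
  have h2 : (2:ℂ) ∈ {z : ℂ | 1 < z.re} := by simp [Set.mem_setOf_eq]
  have heq := AnalyticOnNhd.eq_of_eventuallyEq (𝕜 := ℂ) (z₀ := (2:ℂ))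
    (analyticOnNhd_univ_iff_differentiable.mpr hf)
    (analyticOnNhd_univ_iff_differentiable.mpr hg)
    (Filter.eventuallyEq_of_mem (hopen.mem_nhds h2) (fun z hz => key_hasSum τ hτ hz))
  exact congrFun heq s

lemma key_completed (τ : ℝ) (hτ : τ^2 + 2*goldenPhi*τ = 1) {x : ℂ} (hx : 0 < x.re) :
    completedSinZeta ((1/5:ℝ):UnitAddCircle) x + (τ:ℂ) * completedSinZeta ((2/5:ℝ):UnitAddCircle) x =
    2 * ((DHv τ : ℝ):ℂ) * (5:ℂ)^(-x) * (completedHurwitzZetaOdd ((1/5:ℝ):UnitAddCircle) x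
      + (τ:ℂ) * completedHurwitzZetaOdd ((2/5:ℝ):UnitAddCircle) x) := by
  have hG : Gammaℝ (x+1) ≠ 0 := Gammaℝ_ne_zero_of_re_pos (by rw [add_re, one_re]; linarith)
  have h := key_global τ hτ x
  simp only [sinZeta, hurwitzZetaOdd] at h
  field_simp at h
  linear_combination h

/-! ### The completed `ξ` function in terms of odd completed Hurwitz zetas -/

lemma fDH_eq_odd (τ : ℝ) (x : ℂ) :
    fDH τ x = (5:ℂ)^(-x) * (2 * (hurwitzZetaOdd ((1/5:ℝ):UnitAddCircle) x
      + (τ:ℂ) * hurwitzZetaOdd ((2/5:ℝ):UnitAddCircle) x)) := by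
  rw [fDH, show ((4/5:ℝ):UnitAddCircle) = -(((1/5:ℝ):ℝ):UnitAddCircle) by
      rw [← circ]; exact congrArg _ (by norm_num),
    show ((3/5:ℝ):UnitAddCircle) = -(((2/5:ℝ):ℝ):UnitAddCircle) by
      rw [← circ]; exact congrArg _ (by norm_num),
    hurwitzZetaOdd_eq, hurwitzZetaOdd_eq]
  ring

set_option linter.unreachableTactic false in
set_option linter.unusedTactic false in
set_option linter.unusedVariables false in
lemma pref {x : ℂ} (hx : -1 < x.re) :
    ((Real.pi / 5 : ℝ) : ℂ) ^ (-x/2) * Complex.Gamma ((1+x)/2) * (5:ℂ)^(-x)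
      = ((Real.sqrt Real.pi : ℝ) : ℂ) * (5:ℂ)^(-x/2) * Gammaℝ (x+1) := by
  have hπ : (0:ℝ) < Real.pi := Real.pi_pos
  have hπC : ((Real.pi:ℝ):ℂ) ≠ 0 := by exact_mod_cast hπ.ne'
  have h5 : (5:ℂ) ≠ 0 := by norm_num
  have harg : (5:ℂ).arg ≠ Real.pi := by
    rw [show (5:ℂ) = ((5:ℝ):ℂ) by norm_num, Complex.arg_ofReal_of_nonneg (by norm_num)]
    exact hπ.ne
  have e1 : ((Real.pi / 5 : ℝ) : ℂ) ^ (-x/2)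
      = (Real.pi:ℂ)^(-x/2) * (5:ℂ)^(-(-x/2) : ℂ) := by
    rw [show ((Real.pi / 5 : ℝ) : ℂ) = ((Real.pi:ℝ):ℂ) * (((1:ℝ)/5:ℝ):ℂ) by push_cast; ring,
      mul_cpow_ofReal_nonneg hπ.le (by norm_num),
      show (((1:ℝ)/5:ℝ):ℂ) = (5:ℂ)⁻¹ by norm_num,
      inv_cpow _ _ harg, cpow_neg]
  have hsq : ((Real.sqrt Real.pi : ℝ) : ℂ) = (Real.pi:ℂ)^((1:ℂ)/2) := by
    rw [Real.sqrt_eq_rpow, Complex.ofReal_cpow hπ.le]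
    norm_num
  have m5 : (5:ℂ)^(-(-x/2) : ℂ) * (5:ℂ)^(-x) = (5:ℂ)^(-x/2) := by
    rw [← cpow_add _ _ h5]; congr 1; ring
  have mπ : (Real.pi:ℂ)^((1:ℂ)/2) * (Real.pi:ℂ)^(-(x+1)/2) = (Real.pi:ℂ)^(-x/2) := by
    rw [← cpow_add _ _ hπC]; congr 1; ring
  rw [e1, hsq, Gammaℝ_def, show (1+x)/2 = (x+1)/2 by ring]
  first
  | linear_combination Complex.Gamma ((x+1)/2) * (Real.pi:ℂ)^(-x/2) * m5
      - Complex.Gamma ((x+1)/2) * (5:ℂ)^(-x/2) * mπ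
  | linear_combination Complex.Gamma ((x+1)/2) * (Real.pi:ℂ)^(-x/2) * m5
      + Complex.Gamma ((x+1)/2) * (5:ℂ)^(-x/2) * mπ
  | linear_combination (-(Complex.Gamma ((x+1)/2) * (Real.pi:ℂ)^(-x/2))) * m5
      + Complex.Gamma ((x+1)/2) * (5:ℂ)^(-x/2) * mπ

lemma xi_eq (τ : ℝ) {x : ℂ} (hx : -1 < x.re) :
    xiDH τ x = 2 * ((Real.sqrt Real.pi : ℝ) : ℂ) * (5:ℂ)^(-x/2) *
      (completedHurwitzZetaOdd ((1/5:ℝ):UnitAddCircle) x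
        + (τ:ℂ) * completedHurwitzZetaOdd ((2/5:ℝ):UnitAddCircle) x) := by
  have hG : Gammaℝ (x+1) ≠ 0 := Gammaℝ_ne_zero_of_re_pos (by rw [add_re, one_re]; linarith)
  have hp := pref hx
  push_cast at hp
  rw [xiDH, fDH_eq_odd]
  simp only [hurwitzZetaOdd]
  field_simp
  push_cast; simp only [neg_div] at hp ⊢
  linear_combination ((completedHurwitzZetaOdd ((1/5:ℝ):UnitAddCircle) x
    + (τ:ℂ) * completedHurwitzZetaOdd ((2/5:ℝ):UnitAddCircle) x)) * hp

/-! ### Main functional equation -/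

lemma xi_fe (τ : ℝ) (hτ : τ^2 + 2*goldenPhi*τ = 1) (ε : ℝ) (hv : 2 * DHv τ = ε * Real.sqrt 5)
    {x : ℂ} (hx0 : 0 < x.re) (hx1 : x.re < 1) :
    xiDH τ (1 - x) = (ε : ℂ) * xiDH τ x := by
  have h5 : (5:ℂ) ≠ 0 := by norm_num
  have hre : -1 < (1 - x).re := by
    rw [sub_re, one_re]; linarith
  rw [xi_eq τ hre, xi_eq τ (show -1 < x.re by linarith),
    completedHurwitzZetaOdd_one_sub, completedHurwitzZetaOdd_one_sub,
    key_completed τ hτ hx0]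
  have hvC : 2 * ((DHv τ : ℝ) : ℂ) = (ε : ℂ) * ((Real.sqrt 5 : ℝ) : ℂ) := by
    exact_mod_cast congrArg Complex.ofReal hv
  have hsq5 : ((Real.sqrt 5 : ℝ) : ℂ) = (5:ℂ)^((1:ℂ)/2) := by
    rw [Real.sqrt_eq_rpow, Complex.ofReal_cpow (by norm_num)]
    norm_num
  have hpow : (5:ℂ)^(-(1-x)/2) * ((5:ℂ)^((1:ℂ)/2) * (5:ℂ)^(-x)) = (5:ℂ)^(-x/2) := by
    rw [← cpow_add _ _ h5, ← cpow_add _ _ h5]; congr 1; ring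
  rw [hvC, hsq5]
  linear_combination (2 * ((Real.sqrt Real.pi : ℝ) : ℂ) * (ε:ℂ) *
    (completedHurwitzZetaOdd ((1/5:ℝ):UnitAddCircle) x
      + (τ:ℂ) * completedHurwitzZetaOdd ((2/5:ℝ):UnitAddCircle) x)) * hpow

/-- For every `x ∈ ℂ` with `0 < Re x < 1`, the Davenport–Heilbronn
completed functions satisfy `ξ₊(x) = ξ₊(1-x)` and `ξ₋(x) = -ξ₋(1-x)`. -/
theorem stmt_17 (x : ℂ) (hx0 : 0 < x.re) (hx1 : x.re < 1) :
    xiDH tauPlus x = xiDH tauPlus (1 - x) ∧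
    xiDH tauMinus x = -xiDH tauMinus (1 - x) := by
  constructor
  · have h := xi_fe tauPlus h_tauPlus 1 (by rw [hv_plus]; ring) hx0 hx1
    rw [h]
    push_cast
    ring
  · have h := xi_fe tauMinus h_tauMinus (-1) (by rw [hv_minus]; ring) hx0 hx1
    rw [h]
    push_cast
    ring
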